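/- arXiv:2405.05927 — 2 statements merged into one kernel-verified Lean document; each statement's English description precedes it below -/
import Mathlib

section
/- For every α, β ∈ (0,1] there exists a constant c > 0 such that for all ε > 0: ∫ from (α/2)·min{1, ε(|log ε|+1)} to α of β·min{ε/x, 1} dx ≥ c·min{ε(|log ε|+1), 1}. -/
open MeasureTheory

private lemma integ_aux (β ε a b : ℝ) (ha : 0 < a) :
    IntegrableOn (fun x => β * min (ε / x) 1) (Set.Ioo a b) := by
  have hc : ContinuousOn (fun x : ℝ => β * min (ε / x) 1) (Set.Icc a b) := by
    refine continuousOn_const.mul (ContinuousOn.inf ?_ continuousOn_const)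
    exact continuousOn_const.div continuousOn_id
      (fun x hx => ne_of_gt (lt_of_lt_of_le ha hx.1))
  exact (hc.integrableOn_Icc).mono_set Set.Ioo_subset_Icc_self

private lemma log_le_two_fifth (x : ℝ) (hx : 0 < x) : Real.log x ≤ 2 / 5 * x := by
  have he : (2.7182818283 : ℝ) < Real.exp 1 := Real.exp_one_gt_d9
  have h2 : 0 < Real.exp 1 := Real.exp_pos 1
  have h1 : Real.log (x / Real.exp 1) ≤ x / Real.exp 1 - 1 :=
    Real.log_le_sub_one_of_pos (by positivity)
  rw [Real.log_div (ne_of_gt hx) (ne_of_gt h2), Real.log_exp] at h1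
  have h3 : x / Real.exp 1 ≤ 2 / 5 * x := by
    rw [div_le_iff₀ h2]
    nlinarith
  linarith

set_option maxHeartbeats 1000000 in
/-- **Elementary integral estimate.** For `α, β ∈ (0,1]` the integral of
`β·min{ε/x, 1}` over `((α/2)·min{1, ε(|log ε|+1)}, α)` is bounded below by
`c·min{ε(|log ε|+1), 1}`. -/
theorem stmt_11 (α β : ℝ) (hα : α ∈ Set.Ioc (0 : ℝ) 1) (hβ : β ∈ Set.Ioc (0 : ℝ) 1) :
    ∃ c > 0, ∀ ε > 0,
      c * min (ε * (|Real.log ε| + 1)) 1 ≤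
        ∫ x in Set.Ioo (α / 2 * min 1 (ε * (|Real.log ε| + 1))) α,
          β * min (ε / x) 1 := by
  obtain ⟨hα0, hα1⟩ := hα
  obtain ⟨hβ0, hβ1⟩ := hβ
  have he4 : Real.exp 4 < 55 := by
    have he : Real.exp 1 < 2.7182818286 := Real.exp_one_lt_d9
    have h4 : Real.exp 4 = Real.exp 1 ^ 4 := by
      rw [← Real.exp_nat_mul]; norm_num
    have hp : (0:ℝ) < Real.exp 1 := Real.exp_pos 1
    have h2 : Real.exp 1 ^ 2 < 7.39 := by nlinarith
    rw [h4]
    nlinarith [sq_nonneg (Real.exp 1), h2]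
  have he4p : (0:ℝ) < Real.exp 4 := Real.exp_pos 4
  refine ⟨β * α ^ 4 / 110, by positivity, fun ε hε => ?_⟩
  obtain ⟨L, hLdef⟩ : ∃ L : ℝ, L = |Real.log ε| + 1 := ⟨_, rfl⟩
  rw [← hLdef]
  have hL1 : 1 ≤ L := by
    have := abs_nonneg (Real.log ε); rw [hLdef]; linarith
  have hL0 : 0 < L := by linarith
  obtain ⟨a, hadef⟩ : ∃ a : ℝ, a = α / 2 * min 1 (ε * L) := ⟨_, rfl⟩
  rw [← hadef]
  have hεL0 : 0 < ε * L := by positivity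
  have hm1 : min 1 (ε * L) ≤ 1 := min_le_left _ _
  have hm0 : 0 < min 1 (ε * L) := lt_min one_pos hεL0
  have ha0 : 0 < a := by rw [hadef]; positivity
  have hah : a ≤ α / 2 := by
    rw [hadef]
    calc α / 2 * min 1 (ε * L) ≤ α / 2 * 1 :=
          mul_le_mul_of_nonneg_left hm1 (by linarith)
      _ = α / 2 := mul_one _
  have haα : a < α := lt_of_le_of_lt hah (by linarith)
  have hInt : IntegrableOn (fun x => β * min (ε / x) 1) (Set.Ioo a α) :=
    integ_aux β ε a α ha0
  rcases le_or_gt 1 (ε * L) with hcase | hcase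
  · -- Case A : ε * L ≥ 1, then ε ≥ 1/4
    have hε14 : (1:ℝ)/4 ≤ ε := by
      rcases le_or_gt 1 ε with h1 | h1
      · linarith
      · by_contra hlt
        push_neg at hlt
        have hs0 : 0 < Real.sqrt ε := Real.sqrt_pos.2 hε
        have hls : Real.log (Real.sqrt ε)⁻¹ ≤ (Real.sqrt ε)⁻¹ - 1 :=
          Real.log_le_sub_one_of_pos (by positivity)
        rw [Real.log_inv] at hls
        have hlog : Real.log ε = 2 * Real.log (Real.sqrt ε) := by
          conv_lhs => rw [← Real.sq_sqrt hε.le]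
          rw [Real.log_pow]
          push_cast; ring
        have hεneg : Real.log ε < 0 := Real.log_neg hε h1
        have habs : |Real.log ε| = -Real.log ε := abs_of_neg hεneg
        have hLle : L ≤ 2 / Real.sqrt ε := by
          rw [hLdef, habs, hlog, div_eq_mul_inv]
          have hinv : 0 ≤ (Real.sqrt ε)⁻¹ := by positivity
          linarith
        have hεL : ε * L ≤ 2 * Real.sqrt ε := by
          calc ε * L ≤ ε * (2 / Real.sqrt ε) :=
                mul_le_mul_of_nonneg_left hLle hε.le
            _ = 2 * (ε / Real.sqrt ε) := by ring
            _ = 2 * Real.sqrt ε := by rw [Real.div_sqrt]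
        have : Real.sqrt ε < 1/2 := by
          nlinarith [Real.sq_sqrt hε.le, Real.sqrt_nonneg ε]
        nlinarith [Real.sq_sqrt hε.le]
    have hmin1 : min (ε * L) 1 = 1 := min_eq_right hcase
    have hbd : ∀ x ∈ Set.Ioo a α, β / 4 ≤ β * min (ε / x) 1 := by
      intro x hx
      have hx0 : 0 < x := lt_trans ha0 hx.1
      have hx1 : x ≤ 1 := le_of_lt (lt_of_lt_of_le hx.2 hα1)
      have h14 : (1:ℝ)/4 ≤ min (ε / x) 1 := by
        refine le_min ?_ (by norm_num)
        rw [le_div_iff₀ hx0]; nlinarith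
      calc β / 4 = β * (1/4) := by ring
        _ ≤ β * min (ε / x) 1 := mul_le_mul_of_nonneg_left h14 hβ0.le
    have hkey := setIntegral_ge_of_const_le measurableSet_Ioo
      (by rw [Real.volume_Ioo]; exact ENNReal.ofReal_ne_top) hbd hInt
    rw [Real.volume_real_Ioo, max_eq_left (by linarith), smul_eq_mul, mul_comm] at hkey
    rw [hmin1, mul_one]
    have hα4 : α ^ 4 ≤ α := by
      have := pow_le_pow_of_le_one hα0.le hα1 (show 1 ≤ 4 by norm_num)
      simpa using this
    have h1 : β * (α / 2) ≤ β * (α - a) := by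
      apply mul_le_mul_of_nonneg_left (by linarith) hβ0.le
    have h2 : β * α ^ 4 ≤ β * α := mul_le_mul_of_nonneg_left hα4 hβ0.le
    calc β * α ^ 4 / 110 ≤ β / 4 * (α - a) := by nlinarith
      _ ≤ _ := hkey
  · -- Case B : ε * L < 1, ε < 1
    have hε1 : ε < 1 := by nlinarith
    have hεneg : Real.log ε < 0 := Real.log_neg hε hε1
    have habs : |Real.log ε| = -Real.log ε := abs_of_neg hεneg
    have hmin : min (ε * L) 1 = ε * L := min_eq_left hcase.le
    have hmin' : min 1 (ε * L) = ε * L := min_eq_right hcase.le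
    have hLeq : L = -Real.log ε + 1 := by rw [hLdef, habs]
    have hlogα : Real.log α ≤ 0 := Real.log_nonpos hα0.le hα1
    rw [hmin]
    rcases le_or_gt (Real.log ε) (4 * Real.log α - 4) with hsm | hbig
    · -- B2 : ε very small; integrate ε/x
      obtain ⟨b, hbdef⟩ : ∃ b : ℝ, b = max a ε := ⟨_, rfl⟩
      have hb0 : 0 < b := by rw [hbdef]; exact lt_of_lt_of_le ha0 (le_max_left _ _)
      have hεα : ε < α := by
        have : Real.log ε < Real.log α := by linarith
        calc ε = Real.exp (Real.log ε) := (Real.exp_log hε).symm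
          _ < Real.exp (Real.log α) := Real.exp_lt_exp.2 this
          _ = α := Real.exp_log hα0
      have hbα : b < α := by rw [hbdef]; exact max_lt haα hεα
      have hab : a ≤ b := by rw [hbdef]; exact le_max_left _ _
      have hbε : ε ≤ b := by rw [hbdef]; exact le_max_right _ _
      have hbεL : b ≤ ε * L := by
        rw [hbdef]
        refine max_le ?_ (by nlinarith)
        have h1 : a = α / 2 * (ε * L) := by rw [hadef, hmin']
        rw [h1]
        calc α / 2 * (ε * L) ≤ 1 * (ε * L) :=
              mul_le_mul_of_nonneg_right (by linarith) hεL0.le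
          _ = ε * L := one_mul _
      have hsub : Set.Ioo b α ⊆ Set.Ioo a α := Set.Ioo_subset_Ioo hab le_rfl
      have hmono : ∫ x in Set.Ioo b α, β * min (ε / x) 1 ≤
          ∫ x in Set.Ioo a α, β * min (ε / x) 1 := by
        refine setIntegral_mono_set hInt ?_ (HasSubset.Subset.eventuallyLE hsub)
        refine (ae_restrict_iff' measurableSet_Ioo).2 (Filter.Eventually.of_forall ?_)
        intro x hx
        have hx0 : 0 < x := lt_trans ha0 hx.1
        have : 0 ≤ min (ε / x) 1 := le_min (by positivity) one_pos.le
        positivity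
      have hcongr : ∫ x in Set.Ioo b α, β * min (ε / x) 1 =
          ∫ x in Set.Ioo b α, β * ε * x⁻¹ := by
        refine setIntegral_congr_fun measurableSet_Ioo (fun x hx => ?_)
        have hx0 : 0 < x := lt_trans hb0 hx.1
        have hεx : ε ≤ x := le_trans hbε hx.1.le
        rw [min_eq_left ((div_le_one hx0).2 hεx)]
        field_simp
      have hcomp : ∫ x in Set.Ioo b α, β * ε * x⁻¹ =
          β * ε * (Real.log α - Real.log b) := by
        rw [← integral_Ioc_eq_integral_Ioo, ← intervalIntegral.integral_of_le hbα.le,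
          intervalIntegral.integral_const_mul, integral_inv_of_pos hb0 hα0,
          Real.log_div (ne_of_gt hα0) (ne_of_gt hb0)]
      have hlogb : Real.log b ≤ Real.log ε + Real.log L := by
        rw [← Real.log_mul (ne_of_gt hε) (ne_of_gt hL0)]
        exact Real.log_le_log hb0 hbεL
      have hlogL : Real.log L ≤ 2 / 5 * L := log_le_two_fifth L hL0
      have hgap : 7 / 20 * L ≤ Real.log α - Real.log b := by
        rw [hLeq] at hlogL hlogb ⊢
        linarith
      have hα4 : α ^ 4 ≤ 1 := pow_le_one₀ hα0.le hα1
      have hc1 : β * α ^ 4 / 110 ≤ 7 / 20 * β := by nlinarith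
      calc β * α ^ 4 / 110 * (ε * L) ≤ 7 / 20 * β * (ε * L) :=
            mul_le_mul_of_nonneg_right hc1 hεL0.le
        _ = β * ε * (7 / 20 * L) := by ring
        _ ≤ β * ε * (Real.log α - Real.log b) := by
            apply mul_le_mul_of_nonneg_left hgap (by positivity)
        _ = ∫ x in Set.Ioo b α, β * ε * x⁻¹ := hcomp.symm
        _ = ∫ x in Set.Ioo b α, β * min (ε / x) 1 := hcongr.symm
        _ ≤ _ := hmono
    · -- B1 : ε comparable to α
      have hεlb : α ^ 4 / Real.exp 4 < ε := by
        have : Real.exp (4 * Real.log α - 4) < Real.exp (Real.log ε) :=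
          Real.exp_lt_exp.2 hbig
        rw [Real.exp_log hε, Real.exp_sub] at this
        have h4 : Real.exp (4 * Real.log α) = α ^ 4 := by
          rw [show (4:ℝ) * Real.log α = (4:ℕ) * Real.log α by norm_num,
            Real.exp_nat_mul, Real.exp_log hα0]
        rw [h4] at this
        linarith
      have hbd : ∀ x ∈ Set.Ioo a α, β * (α ^ 3 / Real.exp 4) ≤ β * min (ε / x) 1 := by
        intro x hx
        have hx0 : 0 < x := lt_trans ha0 hx.1
        refine mul_le_mul_of_nonneg_left (le_min ?_ ?_) hβ0.le
        · rw [div_le_div_iff₀ he4p hx0]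
          have hxα : x ≤ α := hx.2.le
          have h5 : α ^ 4 < ε * Real.exp 4 := (div_lt_iff₀ he4p).1 hεlb
          nlinarith [pow_nonneg hα0.le 3]
        · rw [div_le_one he4p]
          have h6 : α ^ 3 ≤ 1 := pow_le_one₀ hα0.le hα1
          linarith [Real.add_one_le_exp (4:ℝ)]
      have hkey := setIntegral_ge_of_const_le measurableSet_Ioo
        (by rw [Real.volume_Ioo]; exact ENNReal.ofReal_ne_top) hbd hInt
      rw [Real.volume_real_Ioo, max_eq_left (by linarith), smul_eq_mul, mul_comm] at hkey
      have hstep : β * α ^ 4 / 110 * (ε * L) ≤ β * α ^ 4 / 110 := by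
        have h0 : (0:ℝ) ≤ β * α ^ 4 / 110 := by positivity
        calc β * α ^ 4 / 110 * (ε * L) ≤ β * α ^ 4 / 110 * 1 :=
              mul_le_mul_of_nonneg_left hcase.le h0
          _ = β * α ^ 4 / 110 := mul_one _
      have hstep2 : β * α ^ 4 / 110 ≤ β * (α ^ 3 / Real.exp 4) * (α - a) := by
        have h2 : α / 2 ≤ α - a := by linarith
        have hx : 0 ≤ β * α ^ 3 := by positivity
        have h3 : β * (α ^ 3 / Real.exp 4) * (α / 2) ≤
            β * (α ^ 3 / Real.exp 4) * (α - a) :=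
          mul_le_mul_of_nonneg_left h2 (by positivity)
        refine le_trans ?_ h3
        rw [show β * (α ^ 3 / Real.exp 4) * (α / 2)
            = β * α ^ 3 * (α / 2) / Real.exp 4 by ring, le_div_iff₀ he4p]
        have h4 : β * α ^ 4 / 110 * Real.exp 4 ≤ β * α ^ 4 / 110 * 55 :=
          mul_le_mul_of_nonneg_left he4.le (by positivity)
        calc β * α ^ 4 / 110 * Real.exp 4 ≤ β * α ^ 4 / 110 * 55 := h4
          _ = β * α ^ 3 * (α / 2) := by ring
      linarith [hkey, hstep, hstep2]
end

section
/- Let h : ℝ → ℝ be C² with locally Lipschitz second derivative and h(0) = h'(0) = 0, and let D := {(x,y) ∈ ℝ² : x > h(y)} (locally near the origin). Define ν(y) := (−1, h'(y))/√(1+h'(y)²), τ(y) := (−h'(y), −1)/√(1+h'(y)²), κ(y) := h''(y)/(1+h'(y)²), and Φ(x,y) := (h(y), y) − x·ν(y). Then: (i) the Jacobian matrix of Φ is ∇Φ(x,y) = [[−ν₁(y), τ₁(y)(xκ(y) − √(1+h'(y)²))], [−ν₂(y), τ₂(y)(xκ(y) − √(1+h'(y)²))]]; (ii) ∇Φ(0,0)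 = Id; (iii) there exist neighbourhoods U, V of the origin such that Φ : U → V is a C¹ diffeomorphism with Φ(U ∩ {x > 0}) = D ∩ V and Φ(U ∩ {x = 0}) = ∂D ∩ V; (iv) there exists a constant C > 0 (depending on h) such that for all sufficiently small r > 0, sup_{(x,y)∈Q_r} |∇Φ(x,y) − Id| ≤ C·r, where Q_r := (−r,r)×(−r,r). -/
open MeasureTheory

noncomputable section

/-- The Euclidean norm on `ℝ²` (realized as `Fin 2 → ℝ`). -/
def evnorm (v : Fin 2 → ℝ) : ℝ := Real.sqrt (v 0 ^ 2 + v 1 ^ 2)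

/-- The gradient (Jacobian matrix) `∇u(x)` of `u : ℝ² → ℝ²`. -/
def grad (u : (Fin 2 → ℝ) → (Fin 2 → ℝ)) (x : Fin 2 → ℝ) :
    Matrix (Fin 2) (Fin 2) ℝ :=
  fun i j => fderiv ℝ u x (Pi.single j 1) i

/-- The squared Frobenius norm of a `2 × 2` matrix. -/
def frobSq (A : Matrix (Fin 2) (Fin 2) ℝ) : ℝ := ∑ i, ∑ j, (A i j) ^ 2

/-- The squared (Frobenius) distance of a matrix to a set of matrices. -/
def distSq (A : Matrix (Fin 2) (Fin 2) ℝ)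
    (K : Set (Matrix (Fin 2) (Fin 2) ℝ)) : ℝ :=
  sInf ((fun B => frobSq (A - B)) '' K)

/-- The pointwise (Frobenius) norm `|D²u|(x)` of the second derivative. -/
def hessNorm (u : (Fin 2 → ℝ) → (Fin 2 → ℝ)) (x : Fin 2 → ℝ) : ℝ :=
  Real.sqrt (∑ i, ∑ j, ∑ k,
    (fderiv ℝ (fun y => grad u y i j) x (Pi.single k 1)) ^ 2)

/-- The symmetrized gradient `e(u) = (∇u + ∇uᵀ)/2`. -/
def symGrad (u : (Fin 2 → ℝ) → (Fin 2 → ℝ)) (x : Fin 2 → ℝ) :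
    Matrix (Fin 2) (Fin 2) ℝ :=
  fun i j => (grad u x i j + grad u x j i) / 2

/-- The geometrically nonlinear singular perturbation energy `E_ε(u, Ω)`. -/
def Eenergy (K : Set (Matrix (Fin 2) (Fin 2) ℝ)) (ε : ℝ)
    (u : (Fin 2 → ℝ) → (Fin 2 → ℝ)) (Ω : Set (Fin 2 → ℝ)) : ℝ :=
  (∫ x in Ω, distSq (grad u x) K) + ε * ∫ x in Ω, hessNorm u x

/-- The geometrically linearized singular perturbation energy `F_ε(v, Ω)`. -/
def Fenergy (K : Set (Matrix (Fin 2) (Fin 2) ℝ)) (ε : ℝ)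
    (u : (Fin 2 → ℝ) → (Fin 2 → ℝ)) (Ω : Set (Fin 2 → ℝ)) : ℝ :=
  (∫ x in Ω, distSq (symGrad u x) K) + ε * ∫ x in Ω, hessNorm u x

/-- Regularity class: `u` is differentiable with differentiable gradient
(so `∇u ∈ W^{1,1}` and `|D²u|` is pointwise defined). -/
def Reg (u : (Fin 2 → ℝ) → (Fin 2 → ℝ)) : Prop :=
  Differentiable ℝ u ∧ ∀ i j, Differentiable ℝ (fun x => grad u x i j)

namespace Stmt12Aux
open ContinuousLinearMap

def S (h : ℝ → ℝ) (y : ℝ) : ℝ := Real.sqrt (1 + deriv h y ^ 2)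
def P (h : ℝ → ℝ) (p : Fin 2 → ℝ) : Fin 2 → ℝ :=
  ![h (p 1) - p 0 * (-1 / S h (p 1)), p 1 - p 0 * (deriv h (p 1) / S h (p 1))]
def clm2 (a b : ℝ) : (Fin 2 → ℝ) →L[ℝ] ℝ :=
  a • ContinuousLinearMap.proj 0 + b • ContinuousLinearMap.proj 1
def CLM (A : Matrix (Fin 2) (Fin 2) ℝ) : (Fin 2 → ℝ) →L[ℝ] (Fin 2 → ℝ) :=
  ContinuousLinearMap.pi (fun i => clm2 (A i 0) (A i 1))
lemma clm2_apply (a b : ℝ) (v : Fin 2 → ℝ) : clm2 a b v = a * v 0 + b * v 1 := by simp [clm2]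
lemma CLM_apply (A : Matrix (Fin 2) (Fin 2) ℝ) (v : Fin 2 → ℝ) (i : Fin 2) :
    CLM A v i = A i 0 * v 0 + A i 1 * v 1 := by simp [CLM, clm2]
def Mr (h : ℝ → ℝ) (p : Fin 2 → ℝ) : Matrix (Fin 2) (Fin 2) ℝ :=
  !![1 / S h (p 1),
     deriv h (p 1) - p 0 * (deriv h (p 1) * deriv (deriv h) (p 1) / S h (p 1) ^ 3);
     -(deriv h (p 1) / S h (p 1)),
     1 - p 0 * (deriv (deriv h) (p 1) / S h (p 1) ^ 3)]

variable {h : ℝ → ℝ}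
lemma S_pos (y : ℝ) : 0 < S h y := Real.sqrt_pos.2 (by positivity)
lemma S_ne (y : ℝ) : S h y ≠ 0 := (S_pos y).ne'
lemma S_sq (y : ℝ) : S h y ^ 2 = 1 + deriv h y ^ 2 := Real.sq_sqrt (by positivity)
lemma hd1 (hreg : ContDiff ℝ 2 h) : Differentiable ℝ h := hreg.differentiable (by norm_num)
lemma hd2 (hreg : ContDiff ℝ 2 h) : ContDiff ℝ 1 (deriv h) := by
  have h2 : ContDiff ℝ (1 + 1) h := by norm_num; exact hreg
  exact (contDiff_succ_iff_deriv.mp h2).2.2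
lemma hasDerivAt_S (hreg : ContDiff ℝ 2 h) (y : ℝ) :
    HasDerivAt (S h) (deriv h y * deriv (deriv h) y / S h y) y := by
  have hd : HasDerivAt (deriv h) (deriv (deriv h) y) y :=
    ((hd2 hreg).differentiable one_ne_zero y).hasDerivAt
  have h1 : HasDerivAt (fun y => 1 + deriv h y ^ 2) (2 * deriv h y * deriv (deriv h) y) y := by
    have := ((hd.pow 2)).const_add 1
    exact this.congr_deriv (by norm_num)
  have h2 := h1.sqrt (by positivity)
  convert h2 using 1
  · rfl
  rw [show S h y = Real.sqrt (1 + deriv h y ^ 2) from rfl]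
  field_simp

lemma hasFDerivAt_P (hreg : ContDiff ℝ 2 h) (p : Fin 2 → ℝ) :
    HasFDerivAt (P h) (CLM (Mr h p)) p := by
  set d := deriv h
  set d2 := deriv (deriv h)
  have h1 := hasFDerivAt_apply (𝕜 := ℝ) (F' := fun _ : Fin 2 => ℝ) 0 p
  have h2 := hasFDerivAt_apply (𝕜 := ℝ) (F' := fun _ : Fin 2 => ℝ) 1 p
  have hh : HasFDerivAt (fun q : Fin 2 → ℝ => h (q 1))
      (d (p 1) • (proj 1 : (Fin 2 → ℝ) →L[ℝ] ℝ)) p :=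
    HasDerivAt.comp_hasFDerivAt p ((hd1 hreg (p 1)).hasDerivAt) h2
  have hSd := hasDerivAt_S hreg (p 1)
  have hq : HasDerivAt (fun y => -1 / S h y)
      ((0 * S h (p 1) - (-1) * (d (p 1) * d2 (p 1) / S h (p 1))) / S h (p 1) ^ 2) (p 1) :=
    (hasDerivAt_const (p 1) (-1)).div hSd (S_ne (p 1))
  have hq2 := HasDerivAt.comp_hasFDerivAt (h₂ := fun y => -1 / S h y) p hq h2
  have hdd : HasDerivAt d (d2 (p 1)) (p 1) := ((hd2 hreg).differentiable one_ne_zero (p 1)).hasDerivAt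
  have hr : HasDerivAt (fun y => d y / S h y)
      ((d2 (p 1) * S h (p 1) - d (p 1) * (d (p 1) * d2 (p 1) / S h (p 1))) / S h (p 1) ^ 2)
      (p 1) := hdd.div hSd (S_ne (p 1))
  have hr2 := HasDerivAt.comp_hasFDerivAt (h₂ := fun y => d y / S h y) p hr h2
  have hc0 : HasFDerivAt (fun q : Fin 2 → ℝ => h (q 1) - q 0 * (-1 / S h (q 1)))
      ((d (p 1) • (proj 1 : (Fin 2 → ℝ) →L[ℝ] ℝ)) - ((p 0 • (_ • (proj 1 : (Fin 2 → ℝ) →L[ℝ] ℝ))) + ((-1 / S h (p 1)) • (proj 0 : (Fin 2 → ℝ) →L[ℝ] ℝ)))) p :=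
    hh.sub (h1.mul hq2)
  have hc1 : HasFDerivAt (fun q : Fin 2 → ℝ => q 1 - q 0 * (d (q 1) / S h (q 1)))
      (((proj 1 : (Fin 2 → ℝ) →L[ℝ] ℝ)) - ((p 0 • (_ • (proj 1 : (Fin 2 → ℝ) →L[ℝ] ℝ))) + ((d (p 1) / S h (p 1)) • (proj 0 : (Fin 2 → ℝ) →L[ℝ] ℝ)))) p :=
    h2.sub (h1.mul hr2)
  apply hasFDerivAt_pi''
  intro i
  rw [CLM, ContinuousLinearMap.proj_pi]
  fin_cases i
  · refine hc0.congr_fderiv ?_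
    ext v
    simp only [clm2, add_apply, smul_apply, proj_apply, sub_apply, Mr, Fin.mk_zero, Fin.mk_one,
      Matrix.cons_val', Matrix.cons_val_zero, Matrix.cons_val_one, Matrix.head_cons,
      Matrix.empty_val', Matrix.cons_val_fin_one, Matrix.head_fin_const, smul_eq_mul,
      Matrix.of_apply]
    simp only [d, d2]
    have hne := S_ne (h := h) (p 1)
    field_simp
    ring
  · have hS2 := S_sq (h := h) (p 1)
    have hne := S_ne (h := h) (p 1)
    have key : (d2 (p 1) * S h (p 1) - d (p 1) * (d (p 1) * d2 (p 1) / S h (p 1))) / S h (p 1) ^ 2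
        = d2 (p 1) / S h (p 1) ^ 3 := by
      field_simp
      linear_combination d2 (p 1) * hS2
    rw [key] at hc1
    refine hc1.congr_fderiv ?_
    ext v
    simp only [clm2, add_apply, smul_apply, proj_apply, sub_apply, Mr, Fin.mk_zero, Fin.mk_one,
      Matrix.cons_val', Matrix.cons_val_zero, Matrix.cons_val_one, Matrix.head_cons,
      Matrix.empty_val', Matrix.cons_val_fin_one, Matrix.head_fin_const, smul_eq_mul,
      Matrix.of_apply]
    ring

lemma differentiable_P (hreg : ContDiff ℝ 2 h) : Differentiable ℝ (P h) :=
  fun p => (hasFDerivAt_P hreg p).differentiableAt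

lemma grad_P (hreg : ContDiff ℝ 2 h) (p : Fin 2 → ℝ) : grad (P h) p = Mr h p := by
  funext i j
  have := (hasFDerivAt_P hreg p).fderiv
  rw [grad, this, CLM_apply]
  fin_cases j <;> simp [Pi.single_apply]

lemma Mr_eq (p : Fin 2 → ℝ) :
    Mr h p =
      !![-(-1 / S h (p 1)),
         (-(deriv h (p 1)) / S h (p 1)) *
           (p 0 * (deriv (deriv h) (p 1) / (1 + deriv h (p 1) ^ 2)) - S h (p 1));
         -(deriv h (p 1) / S h (p 1)),
         (-1 / S h (p 1)) *
           (p 0 * (deriv (deriv h) (p 1) / (1 + deriv h (p 1) ^ 2)) - S h (p 1))] := by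
  have hS2 := S_sq (h := h) (p 1)
  have hne := S_ne (h := h) (p 1)
  ext i j
  fin_cases i <;> fin_cases j <;>
    simp only [Mr, Matrix.cons_val', Matrix.cons_val_zero, Matrix.cons_val_one,
      Matrix.head_cons, Matrix.empty_val', Matrix.cons_val_fin_one, Matrix.head_fin_const,
      Matrix.of_apply, Fin.mk_zero, Fin.mk_one]
  · ring
  · rw [← hS2]; field_simp; ring
  · rw [← hS2]; field_simp; ring

lemma S0 (h'0 : deriv h 0 = 0) : S h 0 = 1 := by
  rw [show S h 0 = Real.sqrt (1 + deriv h 0 ^ 2) from rfl, h'0]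
  norm_num

lemma grad_P_zero (hreg : ContDiff ℝ 2 h) (h'0 : deriv h 0 = 0) : grad (P h) 0 = 1 := by
  rw [grad_P hreg]
  ext i j
  fin_cases i <;> fin_cases j <;>
    simp [Mr, S0 h'0, h'0, Matrix.one_apply]

lemma SC1 (hreg : ContDiff ℝ 2 h) : ContDiff ℝ 1 (S h) :=
  (contDiff_const.add ((hd2 hreg).pow 2)).sqrt (fun y => by positivity)

lemma proj_contDiff (i : Fin 2) : ContDiff ℝ 1 (fun p : Fin 2 → ℝ => p i) :=
  (ContinuousLinearMap.proj i : (Fin 2 → ℝ) →L[ℝ] ℝ).contDiff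

lemma PC1 (hreg : ContDiff ℝ 2 h) : ContDiff ℝ 1 (P h) := by
  have c0 := proj_contDiff 0
  have c1 := proj_contDiff 1
  have hS : ContDiff ℝ 1 (fun p : Fin 2 → ℝ => S h (p 1)) := (SC1 hreg).comp c1
  have hSne : ∀ p : Fin 2 → ℝ, S h (p 1) ≠ 0 := fun p => S_ne (p 1)
  apply contDiff_pi.2
  intro i
  fin_cases i
  · show ContDiff ℝ 1 (fun p : Fin 2 → ℝ => h (p 1) - p 0 * (-1 / S h (p 1)))
    exact ((hreg.of_le one_le_two).comp c1).sub (c0.mul (contDiff_const.div hS hSne))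
  · show ContDiff ℝ 1 (fun p : Fin 2 → ℝ => p 1 - p 0 * (deriv h (p 1) / S h (p 1)))
    exact c1.sub (c0.mul (((hd2 hreg).comp c1).div hS hSne))

/-- The function whose sign determines membership in `D`. -/
def G (h : ℝ → ℝ) (p : Fin 2 → ℝ) : ℝ := P h p 0 - h (P h p 1)

/-- The `x`-derivative of `G`. -/
def W (h : ℝ → ℝ) (p : Fin 2 → ℝ) : ℝ :=
  1 / S h (p 1) + deriv h (p 1) / S h (p 1) *
    deriv h (p 1 - p 0 * (deriv h (p 1) / S h (p 1)))

/-- The determinant of `Mr`. -/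
def Wd (h : ℝ → ℝ) (p : Fin 2 → ℝ) : ℝ :=
  S h (p 1) - p 0 * (deriv (deriv h) (p 1) / S h (p 1) ^ 2)

lemma det_Mr (p : Fin 2 → ℝ) : (Mr h p).det = Wd h p := by
  have hS2 := S_sq (h := h) (p 1)
  have hne := S_ne (h := h) (p 1)
  rw [Mr, Matrix.det_fin_two_of, Wd]
  field_simp
  linear_combination (-(S h (p 1) ^ 3 - p 0 * deriv (deriv h) (p 1))) * hS2

lemma W_cont (hreg : ContDiff ℝ 2 h) : Continuous (W h) := by
  have hdc : Continuous (deriv h) := (hd2 hreg).continuous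
  have hSc : Continuous (S h) := (SC1 hreg).continuous
  have c0 : Continuous (fun p : Fin 2 → ℝ => p 0) := continuous_apply 0
  have c1 : Continuous (fun p : Fin 2 → ℝ => p 1) := continuous_apply 1
  have hS1 : Continuous (fun p : Fin 2 → ℝ => S h (p 1)) := hSc.comp c1
  have hSne : ∀ p : Fin 2 → ℝ, S h (p 1) ≠ 0 := fun p => S_ne (p 1)
  exact (continuous_const.div hS1 hSne).add
    (((hdc.comp c1).div hS1 hSne).mul
      (hdc.comp (c1.sub (c0.mul ((hdc.comp c1).div hS1 hSne)))))

lemma Wd_cont (hreg : ContDiff ℝ 2 h) (hlip : LocallyLipschitz (deriv (deriv h))) :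
    Continuous (Wd h) := by
  have hSc : Continuous (S h) := (SC1 hreg).continuous
  have c0 : Continuous (fun p : Fin 2 → ℝ => p 0) := continuous_apply 0
  have c1 : Continuous (fun p : Fin 2 → ℝ => p 1) := continuous_apply 1
  have hS1 : Continuous (fun p : Fin 2 → ℝ => S h (p 1)) := hSc.comp c1
  exact (hS1).sub (c0.mul ((hlip.continuous.comp c1).div (hS1.pow 2)
    (fun p => pow_ne_zero 2 (S_ne (p 1)))))

lemma W_zero (h'0 : deriv h 0 = 0) : W h 0 = 1 := by
  simp [W, h'0, S0 h'0]

lemma Wd_zero (h'0 : deriv h 0 = 0) : Wd h 0 = 1 := by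
  simp [Wd, S0 h'0]

lemma hasDerivAt_G (hreg : ContDiff ℝ 2 h) (x y : ℝ) :
    HasDerivAt (fun t => G h ![t, y]) (W h ![x, y]) x := by
  have A : HasDerivAt (fun t : ℝ => h y - t * (-1 / S h y)) (-(1 * (-1 / S h y))) x :=
    ((hasDerivAt_id x).mul_const (-1 / S h y)).const_sub (h y)
  have B : HasDerivAt (fun t : ℝ => y - t * (deriv h y / S h y))
      (-(1 * (deriv h y / S h y))) x :=
    ((hasDerivAt_id x).mul_const (deriv h y / S h y)).const_sub y
  have C : HasDerivAt (fun t : ℝ => h (y - t * (deriv h y / S h y)))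
      (deriv h (y - x * (deriv h y / S h y)) * (-(1 * (deriv h y / S h y)))) x :=
    HasDerivAt.comp x (hd1 hreg _).hasDerivAt B
  have := A.sub C
  have heq : (-(1 * (-1 / S h y)) -
      deriv h (y - x * (deriv h y / S h y)) * (-(1 * (deriv h y / S h y))))
      = W h ![x, y] := by
    show _ = 1 / S h y + deriv h y / S h y * deriv h (y - x * (deriv h y / S h y))
    ring
  rw [heq] at this
  exact this

lemma G_zero (y : ℝ) : G h ![0, y] = 0 := by
  show (h y - 0 * (-1 / S h y)) - h (y - 0 * (deriv h y / S h y)) = 0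
  simp

lemma mem_square {p : Fin 2 → ℝ} {δ : ℝ} (hδ : 0 < δ) (h0 : |p 0| < δ) (h1 : |p 1| < δ) :
    p ∈ Metric.ball (0 : Fin 2 → ℝ) δ := by
  rw [mem_ball_zero_iff, pi_norm_lt_iff hδ]
  intro i
  fin_cases i <;> simpa [Real.norm_eq_abs]

lemma abs_coord_lt {p : Fin 2 → ℝ} {δ : ℝ} (hp : p ∈ Metric.ball (0 : Fin 2 → ℝ) δ)
    (i : Fin 2) : |p i| < δ := by
  rw [mem_ball_zero_iff] at hp
  exact lt_of_le_of_lt (by rw [← Real.norm_eq_abs]; exact norm_le_pi_norm p i) hp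

lemma sign_G (hreg : ContDiff ℝ 2 h) {δ : ℝ} (hδ : 0 < δ)
    (hW : ∀ q ∈ Metric.ball (0 : Fin 2 → ℝ) δ, 0 < W h q)
    {p : Fin 2 → ℝ} (hp : p ∈ Metric.ball (0 : Fin 2 → ℝ) δ) :
    (0 < p 0 → 0 < G h p) ∧ (p 0 = 0 → G h p = 0) ∧ (p 0 < 0 → G h p < 0) := by
  have hpp : ![p 0, p 1] = p := by
    funext i; fin_cases i <;> rfl
  have hp0 : |p 0| < δ := abs_coord_lt hp 0
  have hp1 : |p 1| < δ := abs_coord_lt hp 1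
  have hcont : ∀ a b : ℝ, ContinuousOn (fun t => G h ![t, p 1]) (Set.Icc a b) :=
    fun a b => fun t _ => (hasDerivAt_G hreg t (p 1)).continuousAt.continuousWithinAt
  have hmemc : ∀ c : ℝ, |c| < δ → (![c, p 1]) ∈ Metric.ball (0 : Fin 2 → ℝ) δ := by
    intro c hc
    apply mem_square hδ <;> simpa
  refine ⟨?_, ?_, ?_⟩
  · intro hx
    obtain ⟨c, hc, hceq⟩ := exists_hasDerivAt_eq_slope (fun t => G h ![t, p 1])
      (fun t => W h ![t, p 1]) hx (hcont 0 (p 0))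
      (fun t _ => hasDerivAt_G hreg t (p 1))
    have hcδ : |c| < δ := by
      rw [abs_lt]
      constructor
      · linarith [hc.1, abs_nonneg (p 0)]
      · calc c < p 0 := hc.2
          _ ≤ |p 0| := le_abs_self _
          _ < δ := hp0
    have hWc := hW _ (hmemc c hcδ)
    rw [hceq] at hWc
    rw [G_zero, sub_zero, sub_zero] at hWc
    have : 0 < G h ![p 0, p 1] := by
      have := mul_pos hWc hx
      rwa [div_mul_cancel₀] at this
      exact hx.ne'
    rwa [hpp] at this
  · intro hx
    have : G h ![p 0, p 1] = 0 := by rw [hx]; exact G_zero (p 1)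
    rwa [hpp] at this
  · intro hx
    obtain ⟨c, hc, hceq⟩ := exists_hasDerivAt_eq_slope (fun t => G h ![t, p 1])
      (fun t => W h ![t, p 1]) hx (hcont (p 0) 0)
      (fun t _ => hasDerivAt_G hreg t (p 1))
    have hcδ : |c| < δ := by
      rw [abs_lt]
      constructor
      · calc -δ < p 0 := by cases abs_lt.1 hp0; linarith
          _ < c := hc.1
      · linarith [hc.2]
    have hWc := hW _ (hmemc c hcδ)
    rw [hceq] at hWc
    rw [G_zero, zero_sub, zero_sub] at hWc
    have hppos : (0:ℝ) < -p 0 := by linarith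
    have h2 := mul_pos hWc hppos
    rw [div_mul_cancel₀ _ hppos.ne'] at h2
    have : G h ![p 0, p 1] < 0 := by linarith
    rwa [hpp] at this


/-- first standard basis vector -/
def e0 : Fin 2 → ℝ := Pi.single 0 1
lemma e0_zero : e0 0 = 1 := rfl
lemma e0_one : e0 1 = 0 := rfl

lemma frontier_D (hreg : ContDiff ℝ 2 h) :
    frontier {p : Fin 2 → ℝ | h (p 1) < p 0} = {p : Fin 2 → ℝ | h (p 1) = p 0} := by
  have hc : Continuous h := (hd1 hreg).continuous
  apply Set.Subset.antisymm
  · exact frontier_lt_subset_eq (hc.comp (continuous_apply 1)) (continuous_apply 0)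
  · intro p hp
    have hp' : h (p 1) = p 0 := hp
    rw [frontier_eq_closure_inter_closure]
    have htend0 : Filter.Tendsto (fun n : ℕ => (1 / ((n : ℝ) + 1))) Filter.atTop (nhds 0) :=
      tendsto_one_div_add_atTop_nhds_zero_nat
    constructor
    · apply mem_closure_of_tendsto
        (f := fun n : ℕ => p + (1 / ((n : ℝ) + 1)) • e0)
        (b := Filter.atTop)
      · have := (htend0.smul_const e0).const_add p
        simpa using this
      · filter_upwards with n
        show h ((p + _) 1) < (p + _) 0
        have hpos : (0 : ℝ) < 1 / ((n : ℝ) + 1) := by positivity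
        simp only [Pi.add_apply, Pi.smul_apply, e0_zero, e0_one, smul_eq_mul, mul_zero, mul_one,
          add_zero]
        rw [hp']
        linarith
    · apply mem_closure_of_tendsto
        (f := fun n : ℕ => p - (1 / ((n : ℝ) + 1)) • e0)
        (b := Filter.atTop)
      · have := (htend0.smul_const e0).const_sub p
        simpa using this
      · filter_upwards with n
        show ¬ (h ((p - _) 1) < (p - _) 0)
        have hpos : (0 : ℝ) < 1 / ((n : ℝ) + 1) := by positivity
        simp only [Pi.sub_apply, Pi.smul_apply, e0_zero, e0_one, smul_eq_mul, mul_zero, mul_one,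
          sub_zero, Set.mem_setOf_eq, not_lt]
        rw [hp']
        linarith

lemma part4 (hreg : ContDiff ℝ 2 h) (hlip : LocallyLipschitz (deriv (deriv h))) (h0 : h 0 = 0) (h'0 : deriv h 0 = 0) :
    ∃ U V : Set (Fin 2 → ℝ), IsOpen U ∧ IsOpen V ∧
      (0 : Fin 2 → ℝ) ∈ U ∧ (0 : Fin 2 → ℝ) ∈ V ∧
      Set.BijOn (P h) U V ∧ ContDiffOn ℝ 1 (P h) U ∧
      (∃ Ψ : (Fin 2 → ℝ) → (Fin 2 → ℝ), ContDiffOn ℝ 1 Ψ V ∧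
        ∀ p ∈ U, Ψ (P h p) = p) ∧
      P h '' (U ∩ {p | 0 < p 0}) = {p : Fin 2 → ℝ | h (p 1) < p 0} ∩ V ∧
      P h '' (U ∩ {p | p 0 = 0}) =
        frontier {p : Fin 2 → ℝ | h (p 1) < p 0} ∩ V := by
  have hgrad0 : CLM (Mr h 0) =
      ((ContinuousLinearEquiv.refl ℝ (Fin 2 → ℝ)) : (Fin 2 → ℝ) →L[ℝ] (Fin 2 → ℝ)) := by
    refine ContinuousLinearMap.ext fun v => funext fun i => ?_
    rw [CLM_apply]
    fin_cases i <;> simp [Mr, h'0, S0 h'0]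
  have hF0 : HasFDerivAt (P h)
      (((ContinuousLinearEquiv.refl ℝ (Fin 2 → ℝ)) : (Fin 2 → ℝ) ≃L[ℝ] (Fin 2 → ℝ)) :
        (Fin 2 → ℝ) →L[ℝ] (Fin 2 → ℝ)) 0 := hgrad0 ▸ hasFDerivAt_P hreg 0
  set e := ContDiffAt.toOpenPartialHomeomorph (P h) ((PC1 hreg).contDiffAt) hF0 one_ne_zero with he
  have hecoe : ⇑e = P h :=
    ContDiffAt.toOpenPartialHomeomorph_coe ((PC1 hreg).contDiffAt) hF0 one_ne_zero
  have h0src : (0 : Fin 2 → ℝ) ∈ e.source :=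
    ContDiffAt.mem_toOpenPartialHomeomorph_source ((PC1 hreg).contDiffAt) hF0 one_ne_zero
  have hOopen : IsOpen (e.source ∩ ((W h) ⁻¹' (Set.Ioi 0) ∩ (Wd h) ⁻¹' (Set.Ioi 0))) :=
    e.open_source.inter ((isOpen_Ioi.preimage (W_cont hreg)).inter
      (isOpen_Ioi.preimage (Wd_cont hreg hlip)))
  have hO0 : (0 : Fin 2 → ℝ) ∈ e.source ∩ ((W h) ⁻¹' (Set.Ioi 0) ∩ (Wd h) ⁻¹' (Set.Ioi 0)) := by
    refine ⟨h0src, ?_, ?_⟩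
    · show W h 0 ∈ Set.Ioi 0
      rw [W_zero h'0]
      exact Set.mem_Ioi.2 one_pos
    · show Wd h 0 ∈ Set.Ioi 0
      rw [Wd_zero h'0]
      exact Set.mem_Ioi.2 one_pos
  obtain ⟨δ, hδ, hball⟩ := Metric.mem_nhds_iff.1 (hOopen.mem_nhds hO0)
  set U := Metric.ball (0 : Fin 2 → ℝ) δ with hU
  have hUsrc : U ⊆ e.source := fun q hq => (hball hq).1
  have hWpos : ∀ q ∈ U, 0 < W h q := fun q hq => (hball hq).2.1
  have hWdpos : ∀ q ∈ U, 0 < Wd h q := fun q hq => (hball hq).2.2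
  set V := P h '' U with hV
  have h0U : (0 : Fin 2 → ℝ) ∈ U := Metric.mem_ball_self hδ
  have hP0 : P h 0 = 0 := by
    funext i
    fin_cases i <;> simp [P, h0]
  refine ⟨U, V, Metric.isOpen_ball, ?_, h0U, ⟨0, h0U, hP0⟩, ?_, (PC1 hreg).contDiffOn, ?_, ?_, ?_⟩
  · -- V open
    rw [hV, ← hecoe]
    exact e.isOpen_image_of_subset_source Metric.isOpen_ball hUsrc
  · -- BijOn
    have hinj : Set.InjOn (P h) U := by
      rw [← hecoe]
      exact e.injOn.mono hUsrc
    exact hinj.bijOn_image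
  · -- inverse
    refine ⟨e.symm, ?_, ?_⟩
    · intro a ha
      obtain ⟨u, huU, rfl⟩ := ha
      have husrc := hUsrc huU
      have htarget : P h u ∈ e.target := by rw [← hecoe]; exact e.map_source husrc
      have hsymm_eq : e.symm (P h u) = u := by
        conv_lhs => rw [← hecoe]
        exact e.left_inv husrc
      have hdet : (Mr h u).det ≠ 0 := by
        rw [det_Mr]
        exact (hWdpos u huU).ne'
      have hInv := (Mr h u).invertibleOfIsUnitDet (isUnit_iff_ne_zero.2 hdet)
      set eqv := ((Mr h u).toLinearEquiv' hInv).toContinuousLinearEquiv with heqv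
      have hcoe : (eqv : (Fin 2 → ℝ) →L[ℝ] (Fin 2 → ℝ)) = CLM (Mr h u) := by
        refine ContinuousLinearMap.ext fun v => funext fun i => ?_
        have : (eqv : (Fin 2 → ℝ) →L[ℝ] (Fin 2 → ℝ)) v = (Mr h u).mulVec v := rfl
        rw [this, CLM_apply]
        simp [Matrix.mulVec, dotProduct, Fin.sum_univ_two]
      have hfd : HasFDerivAt (⇑e) ((eqv : (Fin 2 → ℝ) →L[ℝ] (Fin 2 → ℝ))) (e.symm (P h u)) := by
        rw [hecoe, hsymm_eq, hcoe]
        exact hasFDerivAt_P hreg u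
      have hcd : ContDiffAt ℝ 1 (⇑e) (e.symm (P h u)) := by
        rw [hecoe, hsymm_eq]
        exact (PC1 hreg).contDiffAt
      exact (e.contDiffAt_symm htarget hfd hcd).contDiffWithinAt
    · intro p hp
      conv_lhs => rw [← hecoe]
      exact e.left_inv (hUsrc hp)
  · -- image of x>0
    ext q
    constructor
    · rintro ⟨u, ⟨huU, hupos⟩, rfl⟩
      refine ⟨?_, ⟨u, huU, rfl⟩⟩
      have hs := (sign_G hreg hδ hWpos huU).1 hupos
      have hs' : 0 < P h u 0 - h (P h u 1) := hs
      show h (P h u 1) < P h u 0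
      linarith
    · rintro ⟨hqD, u, huU, rfl⟩
      have hqD' : h (P h u 1) < P h u 0 := hqD
      refine ⟨u, ⟨huU, ?_⟩, rfl⟩
      rcases lt_trichotomy (u 0) 0 with hlt | heq | hgt
      · have hs := (sign_G hreg hδ hWpos huU).2.2 hlt
        have hs' : P h u 0 - h (P h u 1) < 0 := hs
        linarith
      · have hs := (sign_G hreg hδ hWpos huU).2.1 heq
        have hs' : P h u 0 - h (P h u 1) = 0 := hs
        linarith
      · exact hgt
  · -- image of x=0
    rw [frontier_D hreg]
    ext q
    constructor
    · rintro ⟨u, ⟨huU, hu0⟩, rfl⟩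
      refine ⟨?_, ⟨u, huU, rfl⟩⟩
      have hs := (sign_G hreg hδ hWpos huU).2.1 hu0
      have hs' : P h u 0 - h (P h u 1) = 0 := hs
      show h (P h u 1) = P h u 0
      linarith
    · rintro ⟨hqD, u, huU, rfl⟩
      have hqD' : h (P h u 1) = P h u 0 := hqD
      refine ⟨u, ⟨huU, ?_⟩, rfl⟩
      rcases lt_trichotomy (u 0) 0 with hlt | heq | hgt
      · have hs := (sign_G hreg hδ hWpos huU).2.2 hlt
        have hs' : P h u 0 - h (P h u 1) < 0 := hs
        linarith
      · exact heq
      · have hs := (sign_G hreg hδ hWpos huU).1 hgt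
        have hs' : 0 < P h u 0 - h (P h u 1) := hs
        linarith


lemma LL_mul {f g : (Fin 2 → ℝ) → ℝ} (hf : LocallyLipschitz f) (hg : LocallyLipschitz g) :
    LocallyLipschitz fun x => f x * g x := by
  have hm : ContDiff ℝ 1 (fun q : ℝ × ℝ => q.1 * q.2) := contDiff_fst.mul contDiff_snd
  exact hm.locallyLipschitz.comp (hf.prodMk hg)

lemma LL_sub {f g : (Fin 2 → ℝ) → ℝ} (hf : LocallyLipschitz f) (hg : LocallyLipschitz g) :
    LocallyLipschitz fun x => f x - g x := by
  have hm : ContDiff ℝ 1 (fun q : ℝ × ℝ => q.1 - q.2) := contDiff_fst.sub contDiff_snd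
  exact hm.locallyLipschitz.comp (hf.prodMk hg)

lemma LL_neg {f : (Fin 2 → ℝ) → ℝ} (hf : LocallyLipschitz f) :
    LocallyLipschitz fun x => -(f x) := by
  have hm : ContDiff ℝ 1 (fun t : ℝ => -t) := contDiff_id.neg
  exact hm.locallyLipschitz.comp hf

lemma bound_of_LL {f : (Fin 2 → ℝ) → ℝ} (hf : LocallyLipschitz f) (hf0 : f 0 = 0) :
    ∃ C > (0:ℝ), ∃ ε > (0:ℝ), ∀ p : Fin 2 → ℝ, ‖p‖ < ε → |f p| ≤ C * ‖p‖ := by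
  obtain ⟨K, t, ht, hK⟩ := hf 0
  obtain ⟨ε, hε, hballs⟩ := Metric.mem_nhds_iff.1 ht
  refine ⟨(K : ℝ) + 1, by positivity, ε, hε, fun p hp => ?_⟩
  have h1 : p ∈ t := hballs (mem_ball_zero_iff.2 hp)
  have h2 : (0 : Fin 2 → ℝ) ∈ t := hballs (Metric.mem_ball_self hε)
  have hd := hK.dist_le_mul p h1 0 h2
  rw [hf0, dist_zero_right, dist_zero_right, Real.norm_eq_abs] at hd
  have : (K : ℝ) * ‖p‖ ≤ ((K : ℝ) + 1) * ‖p‖ := by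
    have := norm_nonneg p
    nlinarith
  linarith

lemma part5 (hreg : ContDiff ℝ 2 h) (hlip : LocallyLipschitz (deriv (deriv h)))
    (h'0 : deriv h 0 = 0) :
    ∃ C > (0:ℝ), ∃ r₀ > (0:ℝ), ∀ r ∈ Set.Ioo (0 : ℝ) r₀, ∀ p : Fin 2 → ℝ,
      |p 0| < r → |p 1| < r →
        Real.sqrt (frobSq (grad (P h) p - 1)) ≤ C * r := by
  set d := deriv h with hd
  set d2 := deriv (deriv h) with hdd2
  set E00 : (Fin 2 → ℝ) → ℝ := fun p => 1 / S h (p 1) - 1 with hE00d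
  set E01 : (Fin 2 → ℝ) → ℝ := fun p => d (p 1) - p 0 * (d (p 1) * d2 (p 1) / S h (p 1) ^ 3)
    with hE01d
  set E10 : (Fin 2 → ℝ) → ℝ := fun p => -(d (p 1) / S h (p 1)) with hE10d
  set E11 : (Fin 2 → ℝ) → ℝ := fun p => -(p 0 * (d2 (p 1) / S h (p 1) ^ 3)) with hE11d
  have hent : ∀ p : Fin 2 → ℝ, frobSq (grad (P h) p - 1)
      = (E00 p) ^ 2 + (E01 p) ^ 2 + (E10 p) ^ 2 + (E11 p) ^ 2 := by
    intro p
    rw [grad_P hreg]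
    simp only [frobSq, Fin.sum_univ_two, Matrix.sub_apply, Matrix.one_apply, Mr,
      Matrix.cons_val', Matrix.cons_val_zero, Matrix.cons_val_one, Matrix.head_cons,
      Matrix.empty_val', Matrix.cons_val_fin_one, Matrix.head_fin_const, Matrix.of_apply,
      hE00d, hE01d, hE10d, hE11d]
    norm_num
    ring
  -- locally Lipschitz atoms
  have hpi0 : LocallyLipschitz (fun p : Fin 2 → ℝ => p 0) :=
    (ContinuousLinearMap.proj (R := ℝ) (φ := fun _ : Fin 2 => ℝ) 0).lipschitz.locallyLipschitz
  have hpi1 : LocallyLipschitz (fun p : Fin 2 → ℝ => p 1) :=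
    (ContinuousLinearMap.proj (R := ℝ) (φ := fun _ : Fin 2 => ℝ) 1).lipschitz.locallyLipschitz
  have hd' : LocallyLipschitz (fun p : Fin 2 → ℝ => d (p 1)) :=
    ((hd2 hreg).locallyLipschitz).comp hpi1
  have hd2' : LocallyLipschitz (fun p : Fin 2 → ℝ => d2 (p 1)) := hlip.comp hpi1
  have hinv1 : LocallyLipschitz (fun p : Fin 2 → ℝ => (S h (p 1))⁻¹) :=
    (ContDiff.locallyLipschitz ((SC1 hreg).inv (fun y => S_ne y))).comp hpi1
  have hinv3 : LocallyLipschitz (fun p : Fin 2 → ℝ => (S h (p 1) ^ 3)⁻¹) :=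
    (ContDiff.locallyLipschitz (((SC1 hreg).pow 3).inv
      (fun y => pow_ne_zero 3 (S_ne y)))).comp hpi1
  have hLL00 : LocallyLipschitz E00 :=
    LL_sub (LL_mul (LocallyLipschitz.const 1) hinv1) (LocallyLipschitz.const 1)
  have hLL01 : LocallyLipschitz E01 :=
    LL_sub hd' (LL_mul hpi0 (LL_mul (LL_mul hd' hd2') hinv3))
  have hLL10 : LocallyLipschitz E10 := LL_neg (LL_mul hd' hinv1)
  have hLL11 : LocallyLipschitz E11 := LL_neg (LL_mul hpi0 (LL_mul hd2' hinv3))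
  have hz00 : E00 0 = 0 := by simp [hE00d, S0 h'0]
  have hz01 : E01 0 = 0 := by simp [hE01d, h'0]
  have hz10 : E10 0 = 0 := by simp [hE10d, h'0]
  have hz11 : E11 0 = 0 := by simp [hE11d]
  obtain ⟨C00, hC00, ε00, hε00, H00⟩ := bound_of_LL hLL00 hz00
  obtain ⟨C01, hC01, ε01, hε01, H01⟩ := bound_of_LL hLL01 hz01
  obtain ⟨C10, hC10, ε10, hε10, H10⟩ := bound_of_LL hLL10 hz10
  obtain ⟨C11, hC11, ε11, hε11, H11⟩ := bound_of_LL hLL11 hz11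
  refine ⟨C00 + C01 + C10 + C11, by positivity,
    min (min ε00 ε01) (min ε10 ε11), by positivity, fun r hr p hp0 hp1 => ?_⟩
  have hrpos : 0 < r := hr.1
  have hnorm : ‖p‖ < r := by
    rw [pi_norm_lt_iff hrpos]
    intro i
    fin_cases i <;> simpa [Real.norm_eq_abs]
  have hnr : ‖p‖ ≤ r := hnorm.le
  have hb00 : |E00 p| ≤ C00 * r := by
    refine (H00 p (hnorm.trans (lt_of_lt_of_le hr.2 ?_))).trans ?_
    · exact (min_le_left _ _).trans (min_le_left _ _)
    · nlinarith [norm_nonneg p]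
  have hb01 : |E01 p| ≤ C01 * r := by
    refine (H01 p (hnorm.trans (lt_of_lt_of_le hr.2 ?_))).trans ?_
    · exact (min_le_left _ _).trans (min_le_right _ _)
    · nlinarith [norm_nonneg p]
  have hb10 : |E10 p| ≤ C10 * r := by
    refine (H10 p (hnorm.trans (lt_of_lt_of_le hr.2 ?_))).trans ?_
    · exact (min_le_right _ _).trans (min_le_left _ _)
    · nlinarith [norm_nonneg p]
  have hb11 : |E11 p| ≤ C11 * r := by
    refine (H11 p (hnorm.trans (lt_of_lt_of_le hr.2 ?_))).trans ?_
    · exact (min_le_right _ _).trans (min_le_right _ _)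
    · nlinarith [norm_nonneg p]
  rw [show (C00 + C01 + C10 + C11) * r
      = Real.sqrt (((C00 + C01 + C10 + C11) * r) ^ 2) from
    (Real.sqrt_sq (by positivity)).symm]
  apply Real.sqrt_le_sqrt
  rw [hent]
  have s00 : E00 p ^ 2 ≤ (C00 * r) ^ 2 := by
    rw [← sq_abs]; exact pow_le_pow_left₀ (abs_nonneg _) hb00 2
  have s01 : E01 p ^ 2 ≤ (C01 * r) ^ 2 := by
    rw [← sq_abs]; exact pow_le_pow_left₀ (abs_nonneg _) hb01 2
  have s10 : E10 p ^ 2 ≤ (C10 * r) ^ 2 := by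
    rw [← sq_abs]; exact pow_le_pow_left₀ (abs_nonneg _) hb10 2
  have s11 : E11 p ^ 2 ≤ (C11 * r) ^ 2 := by
    rw [← sq_abs]; exact pow_le_pow_left₀ (abs_nonneg _) hb11 2
  have expand : ((C00 + C01 + C10 + C11) * r) ^ 2
      = (C00 * r) ^ 2 + (C01 * r) ^ 2 + (C10 * r) ^ 2 + (C11 * r) ^ 2
        + 2 * ((C00 * r) * (C01 * r) + (C00 * r) * (C10 * r) + (C00 * r) * (C11 * r)
          + (C01 * r) * (C10 * r) + (C01 * r) * (C11 * r) + (C10 * r) * (C11 * r)) := by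
    ring
  have q1 : 0 ≤ (C00 * r) * (C01 * r) :=
    mul_nonneg (mul_nonneg hC00.le hrpos.le) (mul_nonneg hC01.le hrpos.le)
  have q2 : 0 ≤ (C00 * r) * (C10 * r) :=
    mul_nonneg (mul_nonneg hC00.le hrpos.le) (mul_nonneg hC10.le hrpos.le)
  have q3 : 0 ≤ (C00 * r) * (C11 * r) :=
    mul_nonneg (mul_nonneg hC00.le hrpos.le) (mul_nonneg hC11.le hrpos.le)
  have q4 : 0 ≤ (C01 * r) * (C10 * r) :=
    mul_nonneg (mul_nonneg hC01.le hrpos.le) (mul_nonneg hC10.le hrpos.le)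
  have q5 : 0 ≤ (C01 * r) * (C11 * r) :=
    mul_nonneg (mul_nonneg hC01.le hrpos.le) (mul_nonneg hC11.le hrpos.le)
  have q6 : 0 ≤ (C10 * r) * (C11 * r) :=
    mul_nonneg (mul_nonneg hC10.le hrpos.le) (mul_nonneg hC11.le hrpos.le)
  linarith [s00, s01, s10, s11]

end Stmt12Aux

/-- **Lemma (inverse boundary normal coordinates).** For a `C^{2,1}` graph
boundary `{x = h(y)}` with `h(0) = h'(0) = 0`, the map
`Φ(x,y) = (h(y), y) - x·ν(y)` has the stated Jacobian, equals the identity at the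
origin, is a local `C¹` diffeomorphism flattening `∂D` to `{x = 0}` and mapping
`{x > 0}` to `D`, and satisfies `|∇Φ - Id| ≤ C·r` on `Q_r`. -/
theorem stmt_12 (h : ℝ → ℝ) (hreg : ContDiff ℝ 2 h)
    (hlip : LocallyLipschitz (deriv (deriv h)))
    (h0 : h 0 = 0) (h'0 : deriv h 0 = 0) :
    let s : ℝ → ℝ := fun y => Real.sqrt (1 + deriv h y ^ 2)
    let ν : ℝ → Fin 2 → ℝ := fun y => ![-1 / s y, deriv h y / s y]
    let τ : ℝ → Fin 2 → ℝ := fun y => ![-(deriv h y) / s y, -1 / s y]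
    let κ : ℝ → ℝ := fun y => deriv (deriv h) y / (1 + deriv h y ^ 2)
    let Φ : (Fin 2 → ℝ) → (Fin 2 → ℝ) :=
      fun p => ![h (p 1) - p 0 * ν (p 1) 0, p 1 - p 0 * ν (p 1) 1]
    let D : Set (Fin 2 → ℝ) := {p | h (p 1) < p 0}
    Differentiable ℝ Φ ∧
    (∀ p : Fin 2 → ℝ, grad Φ p =
      !![-(ν (p 1) 0), τ (p 1) 0 * (p 0 * κ (p 1) - s (p 1));
         -(ν (p 1) 1), τ (p 1) 1 * (p 0 * κ (p 1) - s (p 1))]) ∧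
    grad Φ 0 = 1 ∧
    (∃ U V : Set (Fin 2 → ℝ), IsOpen U ∧ IsOpen V ∧
      (0 : Fin 2 → ℝ) ∈ U ∧ (0 : Fin 2 → ℝ) ∈ V ∧
      Set.BijOn Φ U V ∧ ContDiffOn ℝ 1 Φ U ∧
      (∃ Ψ : (Fin 2 → ℝ) → (Fin 2 → ℝ), ContDiffOn ℝ 1 Ψ V ∧
        ∀ p ∈ U, Ψ (Φ p) = p) ∧
      Φ '' (U ∩ {p | 0 < p 0}) = D ∩ V ∧
      Φ '' (U ∩ {p | p 0 = 0}) = frontier D ∩ V) ∧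
    (∃ C > 0, ∃ r₀ > 0, ∀ r ∈ Set.Ioo (0 : ℝ) r₀, ∀ p : Fin 2 → ℝ,
      |p 0| < r → |p 1| < r →
        Real.sqrt (frobSq (grad Φ p - 1)) ≤ C * r) := by
  
  intro s ν τ κ Φ D
  refine ⟨?_, ?_, ?_, ?_, ?_⟩
  · exact Stmt12Aux.differentiable_P hreg
  · exact fun p => (Stmt12Aux.grad_P hreg p).trans (Stmt12Aux.Mr_eq p)
  · exact Stmt12Aux.grad_P_zero hreg h'0
  · exact Stmt12Aux.part4 hreg hlip h0 h'0
  · exact Stmt12Aux.part5 hreg hlip h'0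
end
end
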